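/- The base-3/2 Thue–Morse sequence T is mirror invariant: if a word w occurs in T, then its binary complement w* (obtained by replacing each letter 0 by 1 and each letter 1 by 0) also occurs in T. Precisely: for every position m and every length L, there exists a position m' such that for all i < L, T(m' + i) = 1 − T(m + i). -/

import Mathlib

/-- The sum-of-digits function of base 3/2. -/
def s : ℕ → ℕ
  | 0 => 0
  | (N + 1) => ((N + 1) % 3) + s (2 * ((N + 1) / 3))
decreasing_by omega

/-- The base-3/2 Thue–Morse sequence. -/
def T (N : ℕ) : ℕ := s N % 2

lemma s_zero : s 0 = 0 := by rw [s]

lemma s_eq (m : ℕ) : s m = m % 3 + s (2 * (m / 3)) := by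
  cases m with
  | zero => simp [s_zero]
  | succ n => rw [s]

/-- One digit step with a shift divisible by 3. -/
lemma s_split (n c : ℕ) : s (n + 3 * c) = n % 3 + s (2 * (n / 3) + 2 * c) := by
  rw [s_eq (n + 3 * c)]
  have h1 : (n + 3 * c) % 3 = n % 3 := by omega
  have h2 : 2 * ((n + 3 * c) / 3) = 2 * (n / 3) + 2 * c := by omega
  rw [h1, h2]

def f (n : ℕ) : ℕ := 2 * (n / 3)

lemma lemA : ∀ (k a n : ℕ),
    s (n + 3 ^ k * a) + s (f^[k] n) = s n + s (f^[k] n + 2 ^ k * a) := by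
  intro k
  induction k with
  | zero => intro a n; simp [pow_zero, one_mul]; omega
  | succ k ih =>
    intro a n
    have e1 : n + 3 ^ (k + 1) * a = n + 3 * (3 ^ k * a) := by ring
    have e2 : s (n + 3 ^ (k + 1) * a) = n % 3 + s (f n + 3 ^ k * (2 * a)) := by
      rw [e1, s_split]
      have : 2 * (3 ^ k * a) = 3 ^ k * (2 * a) := by ring
      rw [this]; rfl
    have e3 : s n = n % 3 + s (f n) := by
      rw [s_eq n]; rfl
    have e4 := ih (2 * a) (f n)
    have e5 : f^[k + 1] n = f^[k] (f n) := Function.iterate_succ_apply f k n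
    have e6 : 2 ^ k * (2 * a) = 2 ^ (k + 1) * a := by ring
    rw [e5, e2, e3]
    rw [e6] at e4
    omega

lemma lemC : ∀ (k n : ℕ), n ≤ k → f^[k] n = 0 := by
  intro k
  induction k with
  | zero => intro n hn; interval_cases n; simp
  | succ k ih =>
    intro n hn
    rw [Function.iterate_succ_apply]
    exact ih (f n) (by unfold f; omega)

lemma lemD : ∀ (j u : ℕ), s (3 ^ j * u) = s (2 ^ j * u) := by
  intro j
  induction j with
  | zero => intro u; norm_num
  | succ j ih =>
    intro u
    have e1 : 3 ^ (j + 1) * u = 0 + 3 * (3 ^ j * u) := by ring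
    rw [e1, s_split]
    simp only [Nat.zero_mod, Nat.zero_div, Nat.mul_zero, Nat.zero_add]
    have e2 : 2 * (3 ^ j * u) = 3 ^ j * (2 * u) := by ring
    rw [e2, ih]
    have e3 : 2 ^ j * (2 * u) = 2 ^ (j + 1) * u := by ring
    rw [e3]

lemma lemE (j u : ℕ) : s (3 ^ (j + 1) * u + 1) = 1 + s (2 ^ (j + 1) * u) := by
  have e1 : 3 ^ (j + 1) * u + 1 = 1 + 3 * (3 ^ j * u) := by ring
  rw [e1, s_split]
  norm_num
  have e2 : 2 * (3 ^ j * u) = 3 ^ j * (2 * u) := by ring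
  rw [e2, lemD]
  have e3 : 2 ^ j * (2 * u) = 2 ^ (j + 1) * u := by ring
  rw [e3]

lemma lemB (K : ℕ) : ∃ a : ℕ, s (2 ^ K * a) % 2 = 1 := by
  cases K with
  | zero =>
    refine ⟨1, ?_⟩
    have h1 : s 1 = 1 := by rw [s_eq]; simp [s_zero]
    simp [h1]
  | succ j =>
    set K := j + 1 with hK
    have hc32 : Nat.Coprime 3 2 := by decide
    have hcop : Nat.Coprime (3 ^ K) (2 ^ K) := Nat.Coprime.pow K K hc32
    have h2 : 1 < 2 ^ K := by
      have : 2 ^ 1 ≤ 2 ^ K := Nat.pow_le_pow_right (by norm_num) (by omega)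
      omega
    obtain ⟨w, -, hw⟩ := Nat.exists_mul_mod_eq_one_of_coprime hcop h2
    obtain ⟨p, hP⟩ : ∃ p, 2 ^ K = p + 1 := ⟨2 ^ K - 1, by omega⟩
    set q := 3 ^ K * w / 2 ^ K with hq
    have hw' : 3 ^ K * w = 2 ^ K * q + 1 := by
      have hd := Nat.div_add_mod (3 ^ K * w) (2 ^ K)
      rw [← hq] at hd
      omega
    -- key identity : 3^K * (p*w) + 1 = 2^K * (p*q + 1)
    have key : 3 ^ K * (p * w) + 1 = 2 ^ K * (p * q + 1) := by
      calc 3 ^ K * (p * w) + 1 = p * (3 ^ K * w) + 1 := by ring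
        _ = p * (2 ^ K * q + 1) + 1 := by rw [hw']
        _ = p * ((p + 1) * q + 1) + 1 := by rw [hP]
        _ = (p + 1) * (p * q + 1) := by ring
        _ = 2 ^ K * (p * q + 1) := by rw [← hP]
    have hE := lemE j (p * w)
    rw [← hK] at hE
    rw [key] at hE
    -- hE : s (2^K * (p*q+1)) = 1 + s (2^K * (p*w))
    by_cases h : s (2 ^ K * (p * w)) % 2 = 1
    · exact ⟨p * w, h⟩
    · exact ⟨p * q + 1, by omega⟩

/-- `T` is mirror invariant: whenever a word occurs in `T`, its binary
complement also occurs in `T`. -/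
theorem thueMorse32_mirror_invariant (m L : ℕ) :
    ∃ m' : ℕ, ∀ i < L, T (m' + i) = 1 - T (m + i) := by
  obtain ⟨a, ha⟩ := lemB (m + L)
  refine ⟨m + 3 ^ (m + L) * a, ?_⟩
  intro i hi
  have h0 : f^[m + L] (m + i) = 0 := lemC _ _ (by omega)
  have hA := lemA (m + L) a (m + i)
  rw [h0, s_zero, Nat.zero_add] at hA
  have e : m + 3 ^ (m + L) * a + i = m + i + 3 ^ (m + L) * a := by omega
  rw [e]
  simp only [T]
  omega
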